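/- Sufficient optimality condition (deterministic): Let A ∈ {0,1}^{n×n} be symmetric with a_{ii} = 1, let t ∈ (0,1), and let Y* be the cluster matrix of a partition of a subset V₁ of {1,…,n} into clusters of sizes k₁,…,k_r. Set λ = 1/(48√n), R = {(i,j) : y*_{ij} = 1}, 𝒜 = {(i,j) : a_{ij} = 1}, and let C be the orthogonal projection onto the column space of Y*. Suppose there exist a matrix W ∈ ℝ^{n×n} and a number ε ∈ (0,1) satisfying: (a) ‖W‖ ≤ 1; (b) ‖P_T(W)‖_∞ ≤ (ε/2)·λ·min{c_𝒜, c_{𝒜ᶜ}}; (c) (C + W)_{ij} = −(1+ε)·λ·c_{𝒜ᶜ} for all (i,j) ∈ R ∩ 𝒜ᶜ; w_{ij} = (1+ε)·λ·c_𝒜 for all (i,j) ∈ Rᶜ ∩ 𝒜; (C + W)_{ij} ≤ (1−ε)·λ·c_𝒜 for all (i,j) ∈ R ∩ 𝒜; and w_{ij} ≥ −(1−ε)·λ·c_{𝒜ᶜ} for all (i,j) ∈ Rᶜ ∩ 𝒜ᶜ. Then Y* is the unique maximizer of the objective F_A over the box {Y : 0 ≤ y_{ij} ≤ 1}. -/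

import Mathlib

open MeasureTheory

/-- Nuclear norm: trace of the positive semidefinite square root of `Yᵀ Y`
(equivalently, the sum of the singular values of `Y`). -/
noncomputable def nuclearNorm {n : ℕ} (Y : Matrix (Fin n) (Fin n) ℝ) : ℝ :=
  ((Matrix.posSemidef_conjTranspose_mul_self Y).1.eigenvectorUnitary.1 *
    Matrix.diagonal ((RCLike.ofReal : ℝ → ℝ) ∘ (√·) ∘ (Matrix.posSemidef_conjTranspose_mul_self Y).1.eigenvalues) *
    (star (Matrix.posSemidef_conjTranspose_mul_self Y).1.eigenvectorUnitary :
      Matrix (Fin n) (Fin n) ℝ)).trace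

/-- The objective `F_A(Y) = c_𝒜 Σ_{a_ij=1} y_ij − c_{𝒜ᶜ} Σ_{a_ij=0} y_ij − 48√n ‖Y‖_*`
with `c_𝒜 = √((1−t)/t)` and `c_{𝒜ᶜ} = √(t/(1−t))`. -/
noncomputable def objective {n : ℕ} (A : Matrix (Fin n) (Fin n) ℝ) (t : ℝ)
    (Y : Matrix (Fin n) (Fin n) ℝ) : ℝ :=
  Real.sqrt ((1 - t) / t) * (∑ i, ∑ j, if A i j = 1 then Y i j else 0)
    - Real.sqrt (t / (1 - t)) * (∑ i, ∑ j, if A i j = 0 then Y i j else 0)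
    - 48 * Real.sqrt n * nuclearNorm Y

/-- The box `0 ≤ y_ij ≤ 1`. -/
def inBox {n : ℕ} (Y : Matrix (Fin n) (Fin n) ℝ) : Prop :=
  ∀ i j, 0 ≤ Y i j ∧ Y i j ≤ 1

/-- `Y0` is the unique maximizer of `F` over the box. -/
def isUniqueMaximizer {n : ℕ} (F : Matrix (Fin n) (Fin n) ℝ → ℝ)
    (Y0 : Matrix (Fin n) (Fin n) ℝ) : Prop :=
  inBox Y0 ∧ ∀ Y, inBox Y → Y ≠ Y0 → F Y < F Y0


/-- Spectral norm (largest singular value), as operator norm on Euclidean space. -/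
noncomputable def specNorm {n : ℕ} (W : Matrix (Fin n) (Fin n) ℝ) : ℝ :=
  ‖LinearMap.toContinuousLinearMap (Matrix.toEuclideanLin W)‖

/-- Entrywise maximum norm `‖M‖_∞ = max_{i,j} |m_ij|`. -/
noncomputable def maxAbs {n : ℕ} (M : Matrix (Fin n) (Fin n) ℝ) : ℝ :=
  ⨆ i, ⨆ j, |M i j|


open Matrix
set_option synthInstance.maxHeartbeats 1000000
set_option maxHeartbeats 2000000

section Helpers
variable {n : ℕ}

lemma dot_self_nonneg (a : Fin n → ℝ) : 0 ≤ a ⬝ᵥ a :=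
  Finset.sum_nonneg fun i _ => mul_self_nonneg _

lemma dot_mulVec_mulVec (A B : Matrix (Fin n) (Fin n) ℝ) (v w : Fin n → ℝ) :
    (A *ᵥ v) ⬝ᵥ (B *ᵥ w) = v ⬝ᵥ ((Aᵀ * B) *ᵥ w) := by
  rw [← Matrix.mulVec_mulVec, Matrix.dotProduct_mulVec v, Matrix.vecMul_transpose]

lemma trace_transpose_mul_eq (M N : Matrix (Fin n) (Fin n) ℝ) :
    (Mᵀ * N).trace = ∑ i, ∑ j, M i j * N i j := by
  rw [Matrix.trace]
  simp only [Matrix.diag_apply, Matrix.mul_apply, Matrix.transpose_apply]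
  rw [Finset.sum_comm]

lemma le_maxAbs (M : Matrix (Fin n) (Fin n) ℝ) (i j : Fin n) : |M i j| ≤ maxAbs M := by
  have h1 : |M i j| ≤ ⨆ j', |M i j'| :=
    le_ciSup (f := fun j' => |M i j'|) (Set.Finite.bddAbove (Set.finite_range _)) j
  exact le_trans h1 (le_ciSup (f := fun i' => ⨆ j', |M i' j'|)
    (Set.Finite.bddAbove (Set.finite_range _)) i)

end Helpers



lemma nuclear_eq_sum {n : ℕ} (Y : Matrix (Fin n) (Fin n) ℝ) :
    nuclearNorm Y
      = ∑ i, Real.sqrt ((Matrix.posSemidef_conjTranspose_mul_self Y).1.eigenvalues i) := by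
  set hH := Matrix.posSemidef_conjTranspose_mul_self Y
  rw [nuclearNorm, Matrix.trace_mul_cycle]
  rw [show ((star hH.1.eigenvectorUnitary : Matrix (Fin n) (Fin n) ℝ)) * hH.1.eigenvectorUnitary.1 = 1 from Unitary.coe_star_mul_self _]
  rw [one_mul, Matrix.trace_diagonal]
  rfl

lemma normE {n : ℕ} (v : Fin n → ℝ) :
    ‖(WithLp.equiv 2 (Fin n → ℝ)).symm v‖ = Real.sqrt (v ⬝ᵥ v) := by
  rw [EuclideanSpace.norm_eq]
  congr 1
  simp [dotProduct, Real.norm_eq_abs, sq_abs, sq]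

lemma dot_cs {n : ℕ} (a b : Fin n → ℝ) :
    a ⬝ᵥ b ≤ Real.sqrt (a ⬝ᵥ a) * Real.sqrt (b ⬝ᵥ b) := by
  have h := abs_real_inner_le_norm ((WithLp.equiv 2 (Fin n → ℝ)).symm a)
    ((WithLp.equiv 2 (Fin n → ℝ)).symm b)
  rw [normE, normE] at h
  have he : (inner ℝ ((WithLp.equiv 2 (Fin n → ℝ)).symm a) ((WithLp.equiv 2 (Fin n → ℝ)).symm b) : ℝ)
      = a ⬝ᵥ b := by
    simp [PiLp.inner_apply, dotProduct, RCLike.inner_apply, mul_comm]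
  rw [he] at h
  exact le_trans (le_abs_self _) h

lemma conj_diag_entry {n : ℕ} (M U : Matrix (Fin n) (Fin n) ℝ) (i : Fin n) :
    (Uᵀ * M * U) i i = (fun k => U k i) ⬝ᵥ (M *ᵥ fun k => U k i) := by
  simp only [Matrix.mul_apply, Matrix.transpose_apply, dotProduct, Matrix.mulVec,
    Finset.sum_mul, Finset.mul_sum, dotProduct]
  rw [Finset.sum_comm]
  apply Finset.sum_congr rfl
  intro k _
  apply Finset.sum_congr rfl
  intro j _
  ring



lemma spec_bound {n : ℕ} (M : Matrix (Fin n) (Fin n) ℝ) (v : Fin n → ℝ) :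
    Real.sqrt ((M *ᵥ v) ⬝ᵥ (M *ᵥ v)) ≤ specNorm M * Real.sqrt (v ⬝ᵥ v) := by
  have h : ‖(WithLp.equiv 2 (Fin n → ℝ)).symm (M *ᵥ v)‖
      ≤ specNorm M * ‖(WithLp.equiv 2 (Fin n → ℝ)).symm v‖ :=
    (LinearMap.toContinuousLinearMap (Matrix.toEuclideanLin M)).le_opNorm
    ((WithLp.equiv 2 (Fin n → ℝ)).symm v)
  rwa [normE, normE] at h

lemma spec_le_of_bound {n : ℕ} (M : Matrix (Fin n) (Fin n) ℝ) (c : ℝ) (hc : 0 ≤ c)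
    (h : ∀ v : Fin n → ℝ, (M *ᵥ v) ⬝ᵥ (M *ᵥ v) ≤ c^2 * (v ⬝ᵥ v)) : specNorm M ≤ c := by
  apply ContinuousLinearMap.opNorm_le_bound _ hc
  intro x
  have hx : x = (WithLp.equiv 2 (Fin n → ℝ)).symm ((WithLp.equiv 2 (Fin n → ℝ)) x) := rfl
  rw [hx]
  show ‖(WithLp.equiv 2 (Fin n → ℝ)).symm (M *ᵥ (WithLp.equiv 2 (Fin n → ℝ)) x)‖
    ≤ c * ‖(WithLp.equiv 2 (Fin n → ℝ)).symm ((WithLp.equiv 2 (Fin n → ℝ)) x)‖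
  rw [normE, normE]
  set v := (WithLp.equiv 2 (Fin n → ℝ)) x
  calc Real.sqrt ((M *ᵥ v) ⬝ᵥ (M *ᵥ v)) ≤ Real.sqrt (c^2 * (v ⬝ᵥ v)) := Real.sqrt_le_sqrt (h v)
  _ = c * Real.sqrt (v ⬝ᵥ v) := by
      rw [Real.sqrt_mul (by positivity), Real.sqrt_sq hc]

lemma nuclear_duality {n : ℕ} (Q Y : Matrix (Fin n) (Fin n) ℝ) :
    (Qᵀ * Y).trace ≤ specNorm Q * nuclearNorm Y := by
  set hH := Matrix.posSemidef_conjTranspose_mul_self Y with hHdef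
  set U : Matrix (Fin n) (Fin n) ℝ := (hH.1.eigenvectorUnitary : Matrix (Fin n) (Fin n) ℝ)
    with hUdef
  have hsU : star U = Uᵀ := by
    rw [Matrix.star_eq_conjTranspose, Matrix.conjTranspose_eq_transpose_of_trivial]
  have hUU : Uᵀ * U = 1 := by rw [← hsU]; exact Unitary.coe_star_mul_self _
  have hUU' : U * Uᵀ = 1 := by rw [← hsU]; exact Unitary.coe_mul_star_self _
  have hdiag : Uᵀ * (Yᴴ * Y) * U = Matrix.diagonal (hH.1.eigenvalues) := by
    have hspec := hH.1.spectral_theorem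
    rw [Unitary.conjStarAlgAut_apply] at hspec
    conv_lhs => rw [hspec]
    rw [hsU]
    simp only [← Matrix.mul_assoc, hUU, Matrix.one_mul]
    rw [Matrix.mul_assoc, hUU, Matrix.mul_one]
    rw [Matrix.one_mul]; exact congrArg Matrix.diagonal (funext fun i => by simp)
  have hYu : ∀ i, (Y *ᵥ fun k => U k i) ⬝ᵥ (Y *ᵥ fun k => U k i) = hH.1.eigenvalues i := by
    intro i
    have h1 := conj_diag_entry (Yᴴ * Y) U i
    rw [hdiag] at h1
    have h2 : ((fun k => U k i) ⬝ᵥ ((Yᴴ * Y) *ᵥ fun k => U k i))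
        = (Y *ᵥ fun k => U k i) ⬝ᵥ (Y *ᵥ fun k => U k i) := by
      rw [← Matrix.mulVec_mulVec, Matrix.dotProduct_mulVec,
        Matrix.conjTranspose_eq_transpose_of_trivial, Matrix.vecMul_transpose]
    rw [h2] at h1
    simp [Matrix.diagonal] at h1
    exact h1.symm
  have huu : ∀ i, ((fun k => U k i) ⬝ᵥ fun k => U k i) = 1 := by
    intro i
    have h1 := conj_diag_entry (1 : Matrix (Fin n) (Fin n) ℝ) U i
    rw [Matrix.mul_one, hUU] at h1
    simpa using h1.symm
  have htr : (Qᵀ * Y).trace = ∑ i, (Q *ᵥ fun k => U k i) ⬝ᵥ (Y *ᵥ fun k => U k i) := by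
    have : (Qᵀ * Y).trace = (Uᵀ * (Qᵀ * Y) * U).trace := by
      rw [Matrix.trace_mul_cycle, ← Matrix.mul_assoc, hUU', Matrix.one_mul]
    rw [this, Matrix.trace]
    apply Finset.sum_congr rfl
    intro i _
    rw [Matrix.diag_apply, conj_diag_entry]
    rw [← Matrix.mulVec_mulVec, Matrix.dotProduct_mulVec, Matrix.vecMul_transpose]
  rw [htr, nuclear_eq_sum, Finset.mul_sum]
  apply Finset.sum_le_sum
  intro i _
  calc (Q *ᵥ fun k => U k i) ⬝ᵥ (Y *ᵥ fun k => U k i)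
      ≤ Real.sqrt ((Q *ᵥ fun k => U k i) ⬝ᵥ (Q *ᵥ fun k => U k i))
        * Real.sqrt ((Y *ᵥ fun k => U k i) ⬝ᵥ (Y *ᵥ fun k => U k i)) := dot_cs _ _
    _ ≤ (specNorm Q * Real.sqrt ((fun k => U k i) ⬝ᵥ fun k => U k i))
        * Real.sqrt ((Y *ᵥ fun k => U k i) ⬝ᵥ (Y *ᵥ fun k => U k i)) := by
        apply mul_le_mul_of_nonneg_right (spec_bound _ _) (Real.sqrt_nonneg _)
    _ = specNorm Q * Real.sqrt (hH.1.eigenvalues i) := by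
        rw [huu, hYu]; simp


lemma spec_bound_sq (M : Matrix (Fin n) (Fin n) ℝ) (v : Fin n → ℝ) :
    (M *ᵥ v) ⬝ᵥ (M *ᵥ v) ≤ specNorm M ^ 2 * (v ⬝ᵥ v) := by
  have h1 := dot_self_nonneg (M *ᵥ v)
  have h2 := dot_self_nonneg v
  calc (M *ᵥ v) ⬝ᵥ (M *ᵥ v) = Real.sqrt ((M *ᵥ v) ⬝ᵥ (M *ᵥ v)) ^ 2 := (Real.sq_sqrt h1).symm
    _ ≤ (specNorm M * Real.sqrt (v ⬝ᵥ v)) ^ 2 := by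
        apply pow_le_pow_left₀ (Real.sqrt_nonneg _) (spec_bound M v)
    _ = specNorm M ^ 2 * (v ⬝ᵥ v) := by rw [mul_pow, Real.sq_sqrt h2]


/-- **Sufficient optimality condition (deterministic).** Given a dual certificate `W`
satisfying the approximate stationarity conditions (a)–(c), the cluster matrix `Y*` of the
partition `S` is the unique maximizer of `F_A` over the box. -/
theorem optimality_condition {n r : ℕ} (A : Matrix (Fin n) (Fin n) ℝ) (t : ℝ)
    (ht0 : 0 < t) (ht1 : t < 1)
    (hA01 : ∀ i j, A i j = 0 ∨ A i j = 1) (hAsymm : A.IsSymm) (hAdiag : ∀ i, A i i = 1)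
    -- the partition of V₁ into clusters S 0, …, S (r−1)
    (S : Fin r → Finset (Fin n)) (hSne : ∀ m, (S m).Nonempty)
    (hSdisj : ∀ m m', m ≠ m' → Disjoint (S m) (S m'))
    -- Y* : the cluster matrix of the partition
    (Ystar : Matrix (Fin n) (Fin n) ℝ)
    (hYstar : ∀ i j, Ystar i j = if ∃ m, i ∈ S m ∧ j ∈ S m then 1 else 0)
    -- C : the orthogonal projection onto the column space of Y*
    (C : Matrix (Fin n) (Fin n) ℝ)
    (hC : ∀ i j, C i j = ∑ m, if i ∈ S m ∧ j ∈ S m then ((S m).card : ℝ)⁻¹ else 0)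
    (W : Matrix (Fin n) (Fin n) ℝ) (ε : ℝ) (hε0 : 0 < ε) (hε1 : ε < 1)
    -- (a) spectral norm bound
    (ha : specNorm W ≤ 1)
    -- (b) entrywise bound on the tangent-space projection of W
    (hb : maxAbs (C * W + W * C - C * W * C) ≤
      ε / 2 * (1 / (48 * Real.sqrt n)) *
        min (Real.sqrt ((1 - t) / t)) (Real.sqrt (t / (1 - t))))
    -- (c) elementwise conditions
    (hc1 : ∀ i j, Ystar i j = 1 → A i j = 0 →
      (C + W) i j = -((1 + ε) * (1 / (48 * Real.sqrt n)) * Real.sqrt (t / (1 - t))))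
    (hc2 : ∀ i j, Ystar i j = 0 → A i j = 1 →
      W i j = (1 + ε) * (1 / (48 * Real.sqrt n)) * Real.sqrt ((1 - t) / t))
    (hc3 : ∀ i j, Ystar i j = 1 → A i j = 1 →
      (C + W) i j ≤ (1 - ε) * (1 / (48 * Real.sqrt n)) * Real.sqrt ((1 - t) / t))
    (hc4 : ∀ i j, Ystar i j = 0 → A i j = 0 →
      W i j ≥ -((1 - ε) * (1 / (48 * Real.sqrt n)) * Real.sqrt (t / (1 - t)))) :
    isUniqueMaximizer (objective A t) Ystar := by
  classical
  -- trivial case n = 0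
  rcases Nat.eq_zero_or_pos n with hn | hn
  · subst hn
    refine ⟨fun i j => i.elim0, fun Y _ hne => absurd (by ext i j; exact i.elim0) hne⟩
  -- notation
  set cA : ℝ := Real.sqrt ((1 - t) / t) with hcAdef
  set cB : ℝ := Real.sqrt (t / (1 - t)) with hcBdef
  set s : ℝ := 48 * Real.sqrt n with hsdef
  set mc : ℝ := min cA cB with hmcdef
  have ht1' : (0:ℝ) < 1 - t := by linarith
  have hcA : 0 < cA := Real.sqrt_pos.mpr (div_pos (by linarith) ht0)
  have hcB : 0 < cB := Real.sqrt_pos.mpr (div_pos ht0 ht1')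
  have hmc : 0 < mc := lt_min hcA hcB
  have hs : 0 < s := by
    have : (0:ℝ) < Real.sqrt n := Real.sqrt_pos.mpr (by exact_mod_cast hn)
    positivity
  -- indicator vectors
  set χ : Fin r → Fin n → ℝ := fun m i => if i ∈ S m then 1 else 0 with hχdef
  have hcard : ∀ m, (0:ℝ) < ((S m).card : ℝ) := fun m => by
    exact_mod_cast Finset.card_pos.mpr (hSne m)
  have hdot : ∀ m m', χ m ⬝ᵥ χ m' = if m = m' then ((S m).card : ℝ) else 0 := by
    intro m m'
    by_cases h : m = m'
    · subst h
      rw [if_pos rfl]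
      simp only [dotProduct, hχdef]
      have hterm : ∀ k : Fin n, (if k ∈ S m then (1:ℝ) else 0) * (if k ∈ S m then 1 else 0)
          = if k ∈ S m then 1 else 0 := by intro k; split <;> simp
      rw [Finset.sum_congr rfl fun k _ => hterm k]
      simp [Finset.sum_ite_mem]
    · rw [if_neg h]
      apply Finset.sum_eq_zero
      intro k _
      simp only [hχdef]
      by_cases h1 : k ∈ S m
      · have h2 : k ∉ S m' := fun h2 => (Finset.disjoint_left.mp (hSdisj m m' h) h1) h2
        simp [h1, h2]
      · simp [h1]
  have hvv : ∀ (a b c d : Fin n → ℝ), Matrix.vecMulVec a b * Matrix.vecMulVec c d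
      = (b ⬝ᵥ c) • Matrix.vecMulVec a d := by
    intro a b c d
    ext i j
    simp only [Matrix.mul_apply, Matrix.vecMulVec_apply, Matrix.smul_apply, smul_eq_mul,
      dotProduct, Finset.sum_mul]
    apply Finset.sum_congr rfl
    intros; ring
  have hCeq : C = ∑ m, (((S m).card:ℝ)⁻¹) • Matrix.vecMulVec (χ m) (χ m) := by
    ext i j
    rw [hC]
    simp only [Matrix.sum_apply, Matrix.smul_apply, Matrix.vecMulVec_apply, smul_eq_mul, hχdef]
    refine Finset.sum_congr rfl fun m _ => ?_
    by_cases h1 : i ∈ S m <;> by_cases h2 : j ∈ S m <;> simp [h1, h2]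
  have hYeq : Ystar = ∑ m, Matrix.vecMulVec (χ m) (χ m) := by
    ext i j
    rw [hYstar]
    simp only [Matrix.sum_apply, Matrix.vecMulVec_apply, hχdef]
    by_cases h : ∃ m, i ∈ S m ∧ j ∈ S m
    · obtain ⟨m0, h1, h2⟩ := h
      rw [if_pos ⟨m0, h1, h2⟩, eq_comm]
      rw [Finset.sum_eq_single m0]
      · simp [h1, h2]
      · intro m _ hne
        have : i ∉ S m := fun hi => (Finset.disjoint_left.mp (hSdisj m m0 hne) hi) h1
        simp [this]
      · simp
    · rw [if_neg h, eq_comm]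
      apply Finset.sum_eq_zero
      intro m _
      by_cases h1 : i ∈ S m
      · by_cases h2 : j ∈ S m
        · exact absurd ⟨m, h1, h2⟩ h
        · simp [h2]
      · simp [h1]
  have hCY : C * Ystar = Ystar := by
    rw [hCeq, hYeq, Finset.sum_mul]
    refine Finset.sum_congr rfl fun m _ => ?_
    rw [Finset.mul_sum]
    rw [Finset.sum_eq_single m]
    · rw [smul_mul_assoc, hvv, hdot, if_pos rfl, smul_smul,
        inv_mul_cancel₀ (hcard m).ne', one_smul]
    · intro m' _ hne
      rw [smul_mul_assoc, hvv, hdot, if_neg (Ne.symm hne), zero_smul, smul_zero]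
    · simp
  have hCC : C * C = C := by
    conv_lhs => rw [hCeq, Finset.sum_mul]
    rw [hCeq]
    refine Finset.sum_congr rfl fun m _ => ?_
    rw [Finset.mul_sum]
    rw [Finset.sum_eq_single m]
    · rw [smul_mul_assoc, mul_smul_comm, hvv, hdot, if_pos rfl, smul_smul, smul_smul]
      congr 1
      field_simp
    · intro m' _ hne
      rw [smul_mul_assoc, mul_smul_comm, hvv, hdot, if_neg (Ne.symm hne), zero_smul,
        smul_zero, smul_zero]
    · simp
  have hCsymm : Cᵀ = C := by
    ext i j
    rw [Matrix.transpose_apply, hC, hC]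
    refine Finset.sum_congr rfl fun m _ => ?_
    by_cases h1 : i ∈ S m <;> by_cases h2 : j ∈ S m <;> simp [h1, h2]
  have hYsymm : Ystarᵀ = Ystar := by
    ext i j
    rw [Matrix.transpose_apply, hYstar, hYstar]
    congr 1
    simp only [eq_iff_iff]
    constructor <;> rintro ⟨m, h1, h2⟩ <;> exact ⟨m, h2, h1⟩
  have hYherm : Ystarᴴ = Ystar := by
    rw [Matrix.conjTranspose_eq_transpose_of_trivial, hYsymm]
  have hYpsd : Ystar.PosSemidef := by
    rw [hYeq]
    apply Finset.sum_induction _ _ (fun a b ha hb => ha.add hb) Matrix.PosSemidef.zero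
    intro m _
    rw [Matrix.vecMulVec_eq (Fin 1)]
    have hst : star (χ m) = χ m := by
      funext k; simp
    have : Matrix.replicateRow (Fin 1) (χ m) = (Matrix.replicateCol (Fin 1) (χ m))ᴴ := by
      rw [Matrix.conjTranspose_replicateCol, hst]
    rw [this]
    exact Matrix.posSemidef_self_mul_conjTranspose _
  have hNYstar : nuclearNorm Ystar = Ystar.trace := by
    have h2 : Ystar ^ 2 = Ystarᴴ * Ystar := by rw [hYherm, pow_two]
    have h3 : nuclearNorm Ystar = (cfc Real.sqrt (Ystarᴴ * Ystar)).trace := by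
      rw [(Matrix.posSemidef_conjTranspose_mul_self Ystar).1.cfc_eq]; rfl
    open scoped MatrixOrder in
    have h4 : cfc Real.sqrt (Ystarᴴ * Ystar) = Ystar := by
      have hnn : (0 : Matrix (Fin n) (Fin n) ℝ) ≤ Ystar := hYpsd.nonneg
      rw [← cfcₙ_eq_cfc (hf0 := Real.sqrt_zero),
        ← CFC.sqrt_eq_real_sqrt _ (Matrix.posSemidef_conjTranspose_mul_self Ystar).nonneg,
        hYherm, CFC.sqrt_mul_self Ystar hnn]
    rw [h3, h4]
  -- the dual certificate matrix
  set P : Matrix (Fin n) (Fin n) ℝ := C * W + W * C - C * W * C with hPdef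
  set Q : Matrix (Fin n) (Fin n) ℝ := C + (1 - C) * W * (1 - C) with hQdef
  have hQCP : Q = (C + W) - P := by rw [hQdef, hPdef]; noncomm_ring
  have hC1C : C * (1 - C) = 0 := by rw [Matrix.mul_sub, Matrix.mul_one, hCC, sub_self]
  have h1C1C : (1 - C) * (1 - C) = 1 - C := by
    have : (1 - C) * (1 - C) = 1 - C - (C - C * C) := by noncomm_ring
    rw [this, hCC, sub_self, sub_zero]
  -- spectral norm of Q is at most one
  have hCdot : ∀ z : Fin n → ℝ, z ⬝ᵥ (C *ᵥ z) = (C *ᵥ z) ⬝ᵥ (C *ᵥ z) := by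
    intro z
    rw [dot_mulVec_mulVec, hCsymm, hCC]
  have hQspec : specNorm Q ≤ 1 := by
    apply spec_le_of_bound _ 1 zero_le_one
    intro v
    rw [one_pow, one_mul]
    have hQv : Q *ᵥ v = (C *ᵥ v) + ((1 - C) * W * (1 - C)) *ᵥ v := by
      rw [hQdef, Matrix.add_mulVec]
    set u := C *ᵥ v with hu
    set w := ((1 - C) * W * (1 - C)) *ᵥ v with hw
    have hcross : u ⬝ᵥ w = 0 := by
      rw [hu, hw, dot_mulVec_mulVec, hCsymm]
      have : C * ((1 - C) * W * (1 - C)) = (C * (1 - C)) * (W * (1 - C)) := by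
        noncomm_ring
      rw [this, hC1C, Matrix.zero_mul, Matrix.zero_mulVec, dotProduct_zero]
    have hsplit : (Q *ᵥ v) ⬝ᵥ (Q *ᵥ v) = u ⬝ᵥ u + w ⬝ᵥ w := by
      rw [hQv, add_dotProduct, dotProduct_add,
        dotProduct_add]
      have : w ⬝ᵥ u = 0 := by rw [dotProduct_comm]; exact hcross
      rw [hcross, this]; ring
    have hcontr : ∀ z : Fin n → ℝ, ((1 - C) *ᵥ z) ⬝ᵥ ((1 - C) *ᵥ z) ≤ z ⬝ᵥ z := by
      intro z
      rw [dot_mulVec_mulVec, Matrix.transpose_sub, Matrix.transpose_one, hCsymm, h1C1C,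
        Matrix.sub_mulVec, Matrix.one_mulVec, dotProduct_sub]
      have h1 : 0 ≤ z ⬝ᵥ (C *ᵥ z) := by rw [hCdot]; exact dot_self_nonneg _
      linarith
    have hpyth : u ⬝ᵥ u + ((1 - C) *ᵥ v) ⬝ᵥ ((1 - C) *ᵥ v) = v ⬝ᵥ v := by
      have h1 : u ⬝ᵥ u = v ⬝ᵥ (C *ᵥ v) := (hCdot v).symm
      have h2 : (1 - C) *ᵥ v = v - C *ᵥ v := by
        rw [Matrix.sub_mulVec, Matrix.one_mulVec]
      rw [h2, dotProduct_sub, sub_dotProduct, sub_dotProduct]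
      have h3 : (C *ᵥ v) ⬝ᵥ v = v ⬝ᵥ (C *ᵥ v) := dotProduct_comm _ _
      rw [h1, h3, hCdot]
      ring
    have hwle : w ⬝ᵥ w ≤ ((1 - C) *ᵥ v) ⬝ᵥ ((1 - C) *ᵥ v) := by
      have hw2 : w = (1 - C) *ᵥ (W *ᵥ ((1 - C) *ᵥ v)) := by
        rw [hw, Matrix.mulVec_mulVec, Matrix.mulVec_mulVec]
      have h1 : w ⬝ᵥ w ≤ (W *ᵥ ((1 - C) *ᵥ v)) ⬝ᵥ (W *ᵥ ((1 - C) *ᵥ v)) := by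
        rw [hw2]; exact hcontr _
      have h2 : (W *ᵥ ((1 - C) *ᵥ v)) ⬝ᵥ (W *ᵥ ((1 - C) *ᵥ v))
          ≤ specNorm W ^ 2 * (((1 - C) *ᵥ v) ⬝ᵥ ((1 - C) *ᵥ v)) := spec_bound_sq _ _
      have h3 : specNorm W ^ 2 ≤ 1 := by
        have h4 : 0 ≤ specNorm W := norm_nonneg _
        nlinarith
      have h5 : 0 ≤ ((1 - C) *ᵥ v) ⬝ᵥ ((1 - C) *ᵥ v) := dot_self_nonneg _
      nlinarith
    rw [hsplit]
    linarith
  -- trace identity for Ystar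
  have hQT : Qᵀ = C + (1 - C) * Wᵀ * (1 - C) := by
    rw [hQdef, Matrix.transpose_add, hCsymm, Matrix.transpose_mul, Matrix.transpose_mul,
      Matrix.transpose_sub, Matrix.transpose_one, hCsymm, Matrix.mul_assoc]
  have htrQY : (Qᵀ * Ystar).trace = Ystar.trace := by
    rw [hQT, Matrix.add_mul, Matrix.trace_add, hCY]
    have h1 : (1 - C) * Ystar = 0 := by
      rw [Matrix.sub_mul, Matrix.one_mul, hCY, sub_self]
    have h2 : (1 - C) * Wᵀ * (1 - C) * Ystar = 0 := by
      rw [Matrix.mul_assoc, h1, Matrix.mul_zero]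
    rw [h2, Matrix.trace_zero, add_zero]
  -- Ystar entries are 0 or 1
  have hY01 : ∀ i j, Ystar i j = 0 ∨ Ystar i j = 1 := by
    intro i j; rw [hYstar]; split
    · right; rfl
    · left; rfl
  have hC0 : ∀ i j, Ystar i j = 0 → C i j = 0 := by
    intro i j hy
    rw [hYstar] at hy
    rw [hC]
    apply Finset.sum_eq_zero
    intro m _
    rw [if_neg]
    intro hm
    rw [if_pos ⟨m, hm⟩] at hy
    exact one_ne_zero hy
  constructor
  · intro i j
    rw [hYstar]; split <;> norm_num
  intro Y hY hne
  rw [← sub_neg]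
  set D : Matrix (Fin n) (Fin n) ℝ := Y - Ystar with hDdef
  have hDij : ∀ i j, D i j = Y i j - Ystar i j := fun i j => rfl
  -- entrywise bound
  have key : ∀ i j, cA * (if A i j = 1 then D i j else 0)
      - cB * (if A i j = 0 then D i j else 0) - s * (Q i j * D i j)
      ≤ -(ε / 2 * mc * |D i j|) := by
    intro i j
    have hPb : |P i j| ≤ ε / 2 * (1 / s) * mc := le_trans (le_maxAbs P i j) hb
    have hP1 : s * (P i j * D i j) ≤ ε / 2 * mc * |D i j| := by
      have h1 : P i j * D i j ≤ |P i j| * |D i j| :=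
        le_trans (le_abs_self _) (le_of_eq (abs_mul _ _))
      have h2 : |P i j| * |D i j| ≤ (ε / 2 * (1 / s) * mc) * |D i j| :=
        mul_le_mul_of_nonneg_right hPb (abs_nonneg _)
      calc s * (P i j * D i j) ≤ s * ((ε / 2 * (1 / s) * mc) * |D i j|) :=
            mul_le_mul_of_nonneg_left (le_trans h1 h2) hs.le
        _ = ε / 2 * mc * |D i j| := by field_simp; try ring
    have hmain : cA * (if A i j = 1 then D i j else 0)
        - cB * (if A i j = 0 then D i j else 0) - s * ((C i j + W i j) * D i j)
        ≤ -(ε * mc * |D i j|) := by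
      rcases hY01 i j with hy0 | hy1
      · -- outside clusters: D i j ≥ 0, C i j = 0
        have hd : 0 ≤ D i j := by rw [hDij, hy0, sub_zero]; exact (hY i j).1
        have hCij : C i j = 0 := hC0 i j hy0
        rw [abs_of_nonneg hd, hCij, zero_add]
        rcases hA01 i j with ha0 | ha1
        · rw [if_neg (by rw [ha0]; exact zero_ne_one), if_pos ha0]
          have hw := hc4 i j hy0 ha0
          have hsw : -((1 - ε) * cB) ≤ s * W i j := by
            have h1 := mul_le_mul_of_nonneg_left hw hs.le
            have h2 : s * -((1 - ε) * (1 / s) * cB) = -((1 - ε) * cB) := by field_simp; try ring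
            rw [h2] at h1; exact h1
          have h3 := mul_le_mul_of_nonneg_right hsw hd
          have h4 : mc * D i j ≤ cB * D i j :=
            mul_le_mul_of_nonneg_right (min_le_right _ _) hd
          nlinarith [mul_nonneg hε0.le (sub_nonneg.mpr h4)]
        · rw [if_pos ha1, if_neg (by rw [ha1]; exact one_ne_zero)]
          have hw := hc2 i j hy0 ha1
          have hsw : s * W i j = (1 + ε) * cA := by rw [hw]; field_simp
          have h4 : mc * D i j ≤ cA * D i j :=
            mul_le_mul_of_nonneg_right (min_le_left _ _) hd
          nlinarith [mul_nonneg hε0.le (sub_nonneg.mpr h4)]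
      · -- inside clusters: D i j ≤ 0
        have hd : D i j ≤ 0 := by rw [hDij, hy1]; linarith [(hY i j).2]
        rw [abs_of_nonpos hd]
        rcases hA01 i j with ha0 | ha1
        · rw [if_neg (by rw [ha0]; exact zero_ne_one), if_pos ha0]
          have hw := hc1 i j hy1 ha0
          have hcw : C i j + W i j = (C + W) i j := rfl
          have hsw : s * (C i j + W i j) = -((1 + ε) * cB) := by
            rw [hcw, hw]; field_simp; try ring
          have h4 : cB * D i j ≤ mc * D i j :=
            mul_le_mul_of_nonpos_right (min_le_right _ _) hd
          nlinarith [mul_nonneg hε0.le (sub_nonneg.mpr h4)]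
        · rw [if_pos ha1, if_neg (by rw [ha1]; exact one_ne_zero)]
          have hw := hc3 i j hy1 ha1
          have hcw : C i j + W i j = (C + W) i j := rfl
          have hsw : s * (C i j + W i j) ≤ (1 - ε) * cA := by
            have h1 := mul_le_mul_of_nonneg_left hw hs.le
            have h2 : s * ((1 - ε) * (1 / s) * cA) = (1 - ε) * cA := by field_simp
            rw [hcw]; rw [h2] at h1; exact h1
          have h3 := mul_le_mul_of_nonpos_right hsw hd
          have h4 : cA * D i j ≤ mc * D i j :=
            mul_le_mul_of_nonpos_right (min_le_left _ _) hd
          nlinarith [mul_nonneg hε0.le (sub_nonneg.mpr h4)]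
    have hqd : s * (Q i j * D i j)
        = s * ((C i j + W i j) * D i j) - s * (P i j * D i j) := by
      have : Q i j = (C i j + W i j) - P i j := by
        rw [hQCP]; simp [Matrix.sub_apply, Matrix.add_apply]
      rw [this]; ring
    rw [hqd]
    linarith
  -- nuclear norm comparison
  have hNYnn : 0 ≤ nuclearNorm Y := by
    rw [nuclear_eq_sum]
    exact Finset.sum_nonneg fun i _ => Real.sqrt_nonneg _
  have hdual : (Qᵀ * Y).trace ≤ nuclearNorm Y := by
    calc (Qᵀ * Y).trace ≤ specNorm Q * nuclearNorm Y :=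
          nuclear_duality Q Y
      _ ≤ 1 * nuclearNorm Y := by
          apply mul_le_mul_of_nonneg_right hQspec
          exact hNYnn
      _ = nuclearNorm Y := one_mul _
  have hNdiff : (Qᵀ * D).trace ≤ nuclearNorm Y - nuclearNorm Ystar := by
    have h1 : Qᵀ * D = Qᵀ * Y - Qᵀ * Ystar := by rw [hDdef, Matrix.mul_sub]
    rw [h1, Matrix.trace_sub, htrQY, hNYstar]
    linarith
  have htrsum : (Qᵀ * D).trace = ∑ i, ∑ j, Q i j * D i j := trace_transpose_mul_eq Q D
  -- objective difference
  have hsum1 : (∑ i, ∑ j, if A i j = 1 then Y i j else 0)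
      - (∑ i, ∑ j, if A i j = 1 then Ystar i j else 0)
      = ∑ i, ∑ j, (if A i j = 1 then D i j else 0) := by
    rw [← Finset.sum_sub_distrib]
    refine Finset.sum_congr rfl fun i _ => ?_
    rw [← Finset.sum_sub_distrib]
    refine Finset.sum_congr rfl fun j _ => ?_
    split <;> simp [hDij]
  have hsum2 : (∑ i, ∑ j, if A i j = 0 then Y i j else 0)
      - (∑ i, ∑ j, if A i j = 0 then Ystar i j else 0)
      = ∑ i, ∑ j, (if A i j = 0 then D i j else 0) := by
    rw [← Finset.sum_sub_distrib]
    refine Finset.sum_congr rfl fun i _ => ?_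
    rw [← Finset.sum_sub_distrib]
    refine Finset.sum_congr rfl fun j _ => ?_
    split <;> simp [hDij]
  have hobj : objective A t Y - objective A t Ystar
      ≤ ∑ i, ∑ j, (cA * (if A i j = 1 then D i j else 0)
        - cB * (if A i j = 0 then D i j else 0) - s * (Q i j * D i j)) := by
    have e1 : objective A t Y - objective A t Ystar
        = cA * (∑ i, ∑ j, (if A i j = 1 then D i j else 0))
          - cB * (∑ i, ∑ j, (if A i j = 0 then D i j else 0))
          - s * (nuclearNorm Y - nuclearNorm Ystar) := by
      rw [← hsum1, ← hsum2]
      rw [objective, objective]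
      ring
    rw [e1]
    have e2 : s * (∑ i, ∑ j, Q i j * D i j) ≤ s * (nuclearNorm Y - nuclearNorm Ystar) := by
      apply mul_le_mul_of_nonneg_left _ hs.le
      rw [← htrsum]; exact hNdiff
    have e3 : cA * (∑ i, ∑ j, (if A i j = 1 then D i j else 0))
          - cB * (∑ i, ∑ j, (if A i j = 0 then D i j else 0))
          - s * (∑ i, ∑ j, Q i j * D i j)
        = ∑ i, ∑ j, (cA * (if A i j = 1 then D i j else 0)
          - cB * (if A i j = 0 then D i j else 0) - s * (Q i j * D i j)) := by
      simp only [Finset.mul_sum, ← Finset.sum_sub_distrib]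
    linarith
  have hsumbound : ∑ i, ∑ j, (cA * (if A i j = 1 then D i j else 0)
        - cB * (if A i j = 0 then D i j else 0) - s * (Q i j * D i j))
      ≤ ∑ i, ∑ j, -(ε / 2 * mc * |D i j|) := by
    refine Finset.sum_le_sum fun i _ => Finset.sum_le_sum fun j _ => key i j
  have hT : ∑ i, ∑ j, -(ε / 2 * mc * |D i j|)
      = -(ε / 2 * mc * ∑ i, ∑ j, |D i j|) := by
    simp [Finset.mul_sum]
  have hTpos : 0 < ∑ i, ∑ j, |D i j| := by
    have hne' : ∃ i j, D i j ≠ 0 := by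
      by_contra h
      push_neg at h
      apply hne
      ext i j
      have := h i j
      rw [hDij] at this
      linarith [sub_eq_zero.mp this]
    obtain ⟨i0, j0, h0⟩ := hne'
    have h1 : |D i0 j0| ≤ ∑ j, |D i0 j| :=
      Finset.single_le_sum (f := fun j => |D i0 j|) (fun j _ => abs_nonneg _)
        (Finset.mem_univ j0)
    have h2 : (∑ j, |D i0 j|) ≤ ∑ i, ∑ j, |D i j| :=
      Finset.single_le_sum (f := fun i => ∑ j, |D i j|)
        (fun i _ => Finset.sum_nonneg fun j _ => abs_nonneg _) (Finset.mem_univ i0)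
    calc (0:ℝ) < |D i0 j0| := abs_pos.mpr h0
      _ ≤ ∑ i, ∑ j, |D i j| := le_trans h1 h2
  have hfinal : objective A t Y - objective A t Ystar < 0 := by
    have h1 : 0 < ε / 2 * mc * ∑ i, ∑ j, |D i j| := by positivity
    calc objective A t Y - objective A t Ystar
        ≤ ∑ i, ∑ j, -(ε / 2 * mc * |D i j|) := le_trans hobj hsumbound
      _ = -(ε / 2 * mc * ∑ i, ∑ j, |D i j|) := hT
      _ < 0 := by linarith
  linarith
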